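/- Suppose f₁ : [p₀,0] → ℝ is twice continuously differentiable with λ²·(a³f₁')' = μ·a·f₁ on [p₀,0], f₁(p₀) = 0 and f₁'(p₀) = 1, and f₂ : [p₀,0] → ℝ is twice continuously differentiable with λ²·(a³f₂')' = μ·a·f₂ on [p₀,0], f₂(0) = λ⁴·a(0)³ and f₂'(0) = g·λ⁴ + α·μ². Then (g·λ⁴ + α·μ²)·f₁(0) − λ⁴·a(0)³·f₁'(0) = 0 if and only if there exists c ∈ ℝ with f₂ = c·f₁ on [p₀,0]. -/

import Mathlib

open Real Set

/-- Derivative within the interval [p₀, 0]. -/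
noncomputable def dI (p₀ : ℝ) (f : ℝ → ℝ) : ℝ → ℝ :=
  derivWithin f (Set.Icc p₀ 0)

/-- Let f₁ solve λ²·(a³f₁')' = μ·a·f₁ with f₁(p₀) = 0, f₁'(p₀) = 1,
and f₂ solve the same equation with f₂(0) = λ⁴·a(0)³,
f₂'(0) = g·λ⁴ + α·μ². Then the Wronskian-at-0 condition
(g·λ⁴ + α·μ²)·f₁(0) − λ⁴·a(0)³·f₁'(0) = 0 holds iff f₂ is a scalar
multiple of f₁ on [p₀,0]. -/
theorem wronskian_zero_iff_linearly_dependent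
    (p₀ lam μ α g : ℝ) (hp₀ : p₀ < 0) (hlam : 0 < lam) (hμ : 0 < μ)
    (hα : 0 < α) (hg : 0 < g)
    (a : ℝ → ℝ) (ha : ContDiffOn ℝ 1 a (Icc p₀ 0))
    (hapos : ∀ p ∈ Icc p₀ 0, 0 < a p)
    (f₁ f₂ : ℝ → ℝ)
    (hf₁ : ContDiffOn ℝ 2 f₁ (Icc p₀ 0)) (hf₂ : ContDiffOn ℝ 2 f₂ (Icc p₀ 0))
    (hf₁e : ∀ p ∈ Icc p₀ 0,
      lam ^ 2 * dI p₀ (fun q => a q ^ 3 * dI p₀ f₁ q) p = μ * a p * f₁ p)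
    (hf₂e : ∀ p ∈ Icc p₀ 0,
      lam ^ 2 * dI p₀ (fun q => a q ^ 3 * dI p₀ f₂ q) p = μ * a p * f₂ p)
    (hf₁0 : f₁ p₀ = 0) (hf₁'0 : dI p₀ f₁ p₀ = 1)
    (hf₂0 : f₂ 0 = lam ^ 4 * a 0 ^ 3)
    (hf₂'0 : dI p₀ f₂ 0 = g * lam ^ 4 + α * μ ^ 2) :
    (g * lam ^ 4 + α * μ ^ 2) * f₁ 0 - lam ^ 4 * a 0 ^ 3 * dI p₀ f₁ 0 = 0 ↔
      ∃ c : ℝ, ∀ p ∈ Icc p₀ 0, f₂ p = c * f₁ p := by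
  set I : Set ℝ := Icc p₀ 0 with hIdef
  have hI : UniqueDiffOn ℝ I := uniqueDiffOn_Icc hp₀
  have h0I : (0 : ℝ) ∈ I := ⟨hp₀.le, le_refl 0⟩
  have hp₀I : p₀ ∈ I := ⟨le_refl p₀, hp₀.le⟩
  have hlam2 : lam ^ 2 ≠ 0 := by positivity
  -- basic differentiability facts
  have hd₁ : DifferentiableOn ℝ f₁ I := hf₁.differentiableOn (by norm_num)
  have hd₂ : DifferentiableOn ℝ f₂ I := hf₂.differentiableOn (by norm_num)
  have hd₁' : ContDiffOn ℝ 1 (dI p₀ f₁) I := hf₁.derivWithin hI (by norm_num)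
  have hd₂' : ContDiffOn ℝ 1 (dI p₀ f₂) I := hf₂.derivWithin hI (by norm_num)
  have ha3 : ContDiffOn ℝ 1 (fun q => a q ^ 3) I := ha.pow 3
  have hG₁c : ContDiffOn ℝ 1 (fun q => a q ^ 3 * dI p₀ f₁ q) I := ha3.mul hd₁'
  have hG₂c : ContDiffOn ℝ 1 (fun q => a q ^ 3 * dI p₀ f₂ q) I := ha3.mul hd₂'
  have hG₁d : DifferentiableOn ℝ (fun q => a q ^ 3 * dI p₀ f₁ q) I :=
    hG₁c.differentiableOn (by norm_num)
  have hG₂d : DifferentiableOn ℝ (fun q => a q ^ 3 * dI p₀ f₂ q) I :=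
    hG₂c.differentiableOn (by norm_num)
  have hG₁' : ∀ p ∈ I, derivWithin (fun q => a q ^ 3 * dI p₀ f₁ q) I p
      = μ * a p * f₁ p / lam ^ 2 := by
    intro p hp
    have := hf₁e p hp
    simp only [dI] at this ⊢
    field_simp
    linarith [this]
  have hG₂' : ∀ p ∈ I, derivWithin (fun q => a q ^ 3 * dI p₀ f₂ q) I p
      = μ * a p * f₂ p / lam ^ 2 := by
    intro p hp
    have := hf₂e p hp
    simp only [dI] at this ⊢
    field_simp
    linarith [this]
  constructor
  · -- hard direction: Wronskian zero ⇒ linear dependence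
    intro hW
    -- the Wronskian W is constant on I
    set W : ℝ → ℝ := fun p =>
      f₁ p * (a p ^ 3 * dI p₀ f₂ p) - f₂ p * (a p ^ 3 * dI p₀ f₁ p) with hWdef
    have hWdiff : DifferentiableOn ℝ W I := (hd₁.mul hG₂d).sub (hd₂.mul hG₁d)
    have hWderiv : ∀ p ∈ Ico p₀ 0, derivWithin W I p = 0 := by
      intro p hp
      have hpI : p ∈ I := ⟨hp.1, hp.2.le⟩
      have hu : UniqueDiffWithinAt ℝ I p := hI p hpI
      rw [hWdef]
      rw [derivWithin_fun_sub (hd₁ p hpI |>.fun_mul (hG₂d p hpI)) (hd₂ p hpI |>.fun_mul (hG₁d p hpI)),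
        derivWithin_fun_mul (hd₁ p hpI) (hG₂d p hpI),
        derivWithin_fun_mul (hd₂ p hpI) (hG₁d p hpI),
        hG₁' p hpI, hG₂' p hpI]
      show dI p₀ f₁ p * (a p ^ 3 * dI p₀ f₂ p) + f₁ p * (μ * a p * f₂ p / lam ^ 2)
        - (dI p₀ f₂ p * (a p ^ 3 * dI p₀ f₁ p) + f₂ p * (μ * a p * f₁ p / lam ^ 2)) = 0
      ring
    have hWconst : ∀ p ∈ I, W p = W p₀ :=
      constant_of_derivWithin_zero hWdiff hWderiv
    have hW0 : W 0 = 0 := by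
      rw [hWdef]
      simp only [hf₂0, hf₂'0]
      linear_combination a 0 ^ 3 * hW
    have hWp₀ : W p₀ = 0 := by
      have := hWconst 0 h0I
      rw [hW0] at this; linarith
    have hf₂p₀ : f₂ p₀ = 0 := by
      rw [hWdef] at hWp₀
      simp only [hf₁0, hf₁'0, zero_mul, mul_one] at hWp₀
      have hap₀ : 0 < a p₀ := hapos p₀ hp₀I
      have : a p₀ ^ 3 ≠ 0 := by positivity
      simp only [zero_sub, neg_eq_zero] at hWp₀
      rcases mul_eq_zero.mp hWp₀ with h | h
      · exact h
      · exact absurd h this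
    -- set c and show f₂ = c f₁ by uniqueness of ODE solutions
    set c : ℝ := dI p₀ f₂ p₀ with hcdef
    refine ⟨c, ?_⟩
    -- bounds for a on I
    obtain ⟨xm, hxmI, hxm⟩ :=
      isCompact_Icc.exists_isMinOn (nonempty_Icc.mpr hp₀.le) ha.continuousOn
    obtain ⟨xM, hxMI, hxM⟩ :=
      isCompact_Icc.exists_isMaxOn (nonempty_Icc.mpr hp₀.le) ha.continuousOn
    set m : ℝ := a xm with hmdef
    set M : ℝ := a xM with hMdef
    have hm0 : 0 < m := hapos xm hxmI
    have hM0 : 0 < M := hapos xM hxMI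
    have hmle : ∀ p ∈ I, m ≤ a p := fun p hp => hxm hp
    have hMge : ∀ p ∈ I, a p ≤ M := fun p hp => hxM hp
    -- the clamped vector field
    set pr : ℝ → ℝ := fun t => max p₀ (min t 0) with hπdef
    have hπI : ∀ t, pr t ∈ I := by
      intro t
      refine ⟨le_max_left _ _, ?_⟩
      exact max_le hp₀.le (min_le_right t 0)
    have hπeq : ∀ t ∈ I, pr t = t := by
      intro t ht
      simp only [hπdef]
      rw [min_eq_left ht.2, max_eq_right ht.1]
    set v : ℝ → ℝ × ℝ → ℝ × ℝ := fun t y =>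
      (y.2 / a (pr t) ^ 3, μ * a (pr t) / lam ^ 2 * y.1) with hvdef
    set K₀ : ℝ := max (1 / m ^ 3) (μ * M / lam ^ 2) with hK₀def
    have hK₀0 : 0 ≤ K₀ := le_trans (by positivity) (le_max_left _ _)
    have hv : ∀ t, LipschitzOnWith K₀.toNNReal (v t) (univ : Set (ℝ × ℝ)) := by
      intro t
      apply LipschitzWith.lipschitzOnWith
      apply LipschitzWith.of_dist_le_mul
      intro p q
      rw [Real.coe_toNNReal _ hK₀0]
      have hat : m ≤ a (pr t) ∧ a (pr t) ≤ M := ⟨hmle _ (hπI t), hMge _ (hπI t)⟩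
      have hat0 : 0 < a (pr t) := lt_of_lt_of_le hm0 hat.1
      have hD : 0 ≤ dist p q := dist_nonneg
      have h1 : dist p.1 q.1 ≤ dist p q := le_max_left _ _
      have h2 : dist p.2 q.2 ≤ dist p q := le_max_right _ _
      rw [Prod.dist_eq] at *
      have hm3 : (0:ℝ) < m ^ 3 := by positivity
      have ha3' : m ^ 3 ≤ a (pr t) ^ 3 := pow_le_pow_left₀ hm0.le hat.1 3
      apply max_le
      · -- first component
        have heq1 : dist (p.2 / a (pr t) ^ 3) (q.2 / a (pr t) ^ 3)
            = dist p.2 q.2 / a (pr t) ^ 3 := by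
          rw [Real.dist_eq, Real.dist_eq, ← sub_div, abs_div,
            abs_of_pos (by positivity : (0:ℝ) < a (pr t) ^ 3)]
        rw [heq1]
        calc dist p.2 q.2 / a (pr t) ^ 3
            ≤ dist p.2 q.2 / m ^ 3 :=
              div_le_div_of_nonneg_left dist_nonneg hm3 ha3'
          _ = (1 / m ^ 3) * dist p.2 q.2 := by ring
          _ ≤ K₀ * dist p q :=
              mul_le_mul (le_max_left _ _) h2 dist_nonneg hK₀0
      · -- second component
        have heq2 : dist (μ * a (pr t) / lam ^ 2 * p.1) (μ * a (pr t) / lam ^ 2 * q.1)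
            = (μ * a (pr t) / lam ^ 2) * dist p.1 q.1 := by
          rw [Real.dist_eq, Real.dist_eq, ← mul_sub, abs_mul,
            abs_of_pos (by positivity : (0:ℝ) < μ * a (pr t) / lam ^ 2)]
        rw [heq2]
        have hc2 : μ * a (pr t) / lam ^ 2 ≤ K₀ := by
          refine le_trans ?_ (le_max_right _ _)
          gcongr
          exact hat.2
        exact mul_le_mul hc2 h1 dist_nonneg hK₀0
    -- the solution F of the system with F p₀ = 0
    set F : ℝ → ℝ × ℝ := fun p =>
      (f₂ p - c * f₁ p,
        (a p ^ 3 * dI p₀ f₂ p) - c * (a p ^ 3 * dI p₀ f₁ p)) with hFdef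
    have hFcont : ContinuousOn F I := by
      apply ContinuousOn.prodMk
      · exact (hd₂.continuousOn).sub ((hd₁.continuousOn).const_smul c)
      · exact (hG₂d.continuousOn).sub ((hG₁d.continuousOn).const_smul c)
    have hmemnhds : ∀ t ∈ Ico p₀ (0:ℝ), I ∈ nhdsWithin t (Ici t) := by
      intro t ht
      apply mem_nhdsWithin.mpr
      exact ⟨Iio 0, isOpen_Iio, ht.2, fun x hx => ⟨le_trans ht.1 hx.2, le_of_lt hx.1⟩⟩
    have hF' : ∀ t ∈ Ico p₀ (0:ℝ), HasDerivWithinAt F (v t (F t)) (Ici t) t := by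
      intro t ht
      have htI : t ∈ I := ⟨ht.1, ht.2.le⟩
      have hat0 : 0 < a t := hapos t htI
      have h1 : HasDerivWithinAt (fun p => f₂ p - c * f₁ p)
          (dI p₀ f₂ t - c * dI p₀ f₁ t) I t := by
        exact ((hd₂ t htI).hasDerivWithinAt).sub
          (((hd₁ t htI).hasDerivWithinAt).const_mul c)
      have h2 : HasDerivWithinAt
          (fun p => (a p ^ 3 * dI p₀ f₂ p) - c * (a p ^ 3 * dI p₀ f₁ p))
          (μ * a t * f₂ t / lam ^ 2 - c * (μ * a t * f₁ t / lam ^ 2)) I t := by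
        have hh2 := (hG₂d t htI).hasDerivWithinAt
        have hh1 := (hG₁d t htI).hasDerivWithinAt
        rw [hG₂' t htI] at hh2
        rw [hG₁' t htI] at hh1
        exact hh2.sub (hh1.const_mul c)
      have hcomb : HasDerivWithinAt F
          (dI p₀ f₂ t - c * dI p₀ f₁ t,
            μ * a t * f₂ t / lam ^ 2 - c * (μ * a t * f₁ t / lam ^ 2)) I t :=
        h1.prodMk h2
      have hvF : v t (F t) = (dI p₀ f₂ t - c * dI p₀ f₁ t,
          μ * a t * f₂ t / lam ^ 2 - c * (μ * a t * f₁ t / lam ^ 2)) := by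
        rw [hvdef, hFdef]
        simp only [hπeq t htI]
        have ha3 : (a t : ℝ) ^ 3 ≠ 0 := by positivity
        apply Prod.ext
        · show (a t ^ 3 * dI p₀ f₂ t - c * (a t ^ 3 * dI p₀ f₁ t)) / a t ^ 3
            = dI p₀ f₂ t - c * dI p₀ f₁ t
          field_simp
        · show μ * a t / lam ^ 2 * (f₂ t - c * f₁ t)
            = μ * a t * f₂ t / lam ^ 2 - c * (μ * a t * f₁ t / lam ^ 2)
          field_simp
      rw [hvF]
      exact hcomb.mono_of_mem_nhdsWithin (hmemnhds t ht)
    have hzero' : ∀ t ∈ Ico p₀ (0:ℝ),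
        HasDerivWithinAt (fun _ : ℝ => ((0 : ℝ), (0 : ℝ))) (v t ((0:ℝ), (0:ℝ))) (Ici t) t := by
      intro t ht
      have : v t ((0:ℝ), (0:ℝ)) = ((0:ℝ), (0:ℝ)) := by
        rw [hvdef]
        simp
      rw [this]
      exact hasDerivWithinAt_const t _ _
    have hFp₀ : F p₀ = ((0:ℝ), (0:ℝ)) := by
      simp only [hFdef, hf₁0, hf₁'0, hf₂p₀, hcdef, Prod.mk.injEq]
      constructor <;> ring
    have heq : EqOn F (fun _ => ((0:ℝ), (0:ℝ))) I := by
      apply ODE_solution_unique_of_mem_Icc_right (fun t _ => hv t) hFcont hF'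
        (fun t _ => mem_univ _) continuousOn_const hzero' (fun t _ => mem_univ _)
      simpa using hFp₀
    intro p hp
    have hFp : F p = ((0:ℝ), (0:ℝ)) := heq hp
    have h1 : f₂ p - c * f₁ p = 0 := by
      have := congrArg Prod.fst hFp
      simpa [hFdef] using this
    linarith
  · -- easy direction
    rintro ⟨c, hc⟩
    have hu0 : UniqueDiffWithinAt ℝ I 0 := hI 0 h0I
    have he : dI p₀ f₂ 0 = c * dI p₀ f₁ 0 := by
      have h1 : derivWithin f₂ I 0 = derivWithin (fun p => c * f₁ p) I 0 :=
        derivWithin_congr hc (hc 0 h0I)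
      have h2 : derivWithin (fun p => c * f₁ p) I 0 = c * derivWithin f₁ I 0 :=
        derivWithin_const_mul c (hd₁ 0 h0I)
      simp only [dI]
      rw [h1, h2]
    have h20 : c * f₁ 0 = lam ^ 4 * a 0 ^ 3 := by rw [← hc 0 h0I]; exact hf₂0
    have h2'0 : c * dI p₀ f₁ 0 = g * lam ^ 4 + α * μ ^ 2 := by
      rw [← he]; exact hf₂'0
    linear_combination dI p₀ f₁ 0 * h20 - f₁ 0 * h2'0
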